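/- The map T(r, τ, θ, φ) = −2r·(sin φ cos(τ+φ), sin φ sin(τ+φ), sin(θ+φ) cos(τ+θ+φ), sin(θ+φ) sin(τ+θ+φ)) from (0,∞) × [0,2π) × D to ℝ^4, where D = {(θ,φ) : 0 < θ < π/2, 0 < φ < π/2, 0 < π − θ − φ < π/2}, has Jacobian determinant with absolute value 16 r³ sin φ sin θ sin(θ+φ). -/

import Mathlib

set_option maxHeartbeats 1000000


open Real

/-- The parametrisation `T(r, τ, θ, φ)` of two vertices `(y₂, y₃) ∈ ℝ² × ℝ²` of a
triangle with third vertex at the origin, circumradius `r`, circumcenter direction `τ`,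
and interior angles `θ` (at the origin) and `φ` (at `y₃`).
Coordinates: `x 0 = r`, `x 1 = τ`, `x 2 = θ`, `x 3 = φ`. -/
noncomputable def Tmap : (Fin 4 → ℝ) → (Fin 4 → ℝ) := fun x =>
  ![-2 * x 0 * (Real.sin (x 3) * Real.cos (x 1 + x 3)),
    -2 * x 0 * (Real.sin (x 3) * Real.sin (x 1 + x 3)),
    -2 * x 0 * (Real.sin (x 2 + x 3) * Real.cos (x 1 + x 2 + x 3)),
    -2 * x 0 * (Real.sin (x 2 + x 3) * Real.sin (x 1 + x 2 + x 3))]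

theorem det_fin_four' {R : Type*} [CommRing R] (M : Matrix (Fin 4) (Fin 4) R) :
    M.det =
      M 0 0 * (M 1 1 * (M 2 2 * M 3 3 - M 2 3 * M 3 2) - M 1 2 * (M 2 1 * M 3 3 - M 2 3 * M 3 1) +
          M 1 3 * (M 2 1 * M 3 2 - M 2 2 * M 3 1)) -
        M 0 1 * (M 1 0 * (M 2 2 * M 3 3 - M 2 3 * M 3 2) - M 1 2 * (M 2 0 * M 3 3 - M 2 3 * M 3 0) +
          M 1 3 * (M 2 0 * M 3 2 - M 2 2 * M 3 0)) +
        M 0 2 * (M 1 0 * (M 2 1 * M 3 3 - M 2 3 * M 3 1) - M 1 1 * (M 2 0 * M 3 3 - M 2 3 * M 3 0) +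
          M 1 3 * (M 2 0 * M 3 1 - M 2 1 * M 3 0)) -
        M 0 3 * (M 1 0 * (M 2 1 * M 3 2 - M 2 2 * M 3 1) - M 1 1 * (M 2 0 * M 3 2 - M 2 2 * M 3 0) +
          M 1 2 * (M 2 0 * M 3 1 - M 2 1 * M 3 0)) := by
  simp [Matrix.det_succ_row_zero, Fin.sum_univ_succ, Fin.succAbove_zero, Fin.succ_succAbove_zero,
    Fin.succ_succAbove_succ, Fin.one_succAbove_zero, Fin.succ_zero_eq_one, Fin.succ_one_eq_two,
    show Fin.succAbove (1 : Fin 4) 2 = 3 from rfl, show Fin.succAbove (2 : Fin 4) 2 = 3 from rfl,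
    show Fin.succAbove (3 : Fin 4) 2 = 2 from rfl]
  ring

noncomputable def pr (i : Fin 4) : (Fin 4 → ℝ) →L[ℝ] ℝ := ContinuousLinearMap.proj i

@[simp] lemma pr_apply (i : Fin 4) (v : Fin 4 → ℝ) : pr i v = v i := rfl


theorem stmt_6 (x : Fin 4 → ℝ) (hr : 0 < x 0)
    (hτ : x 1 ∈ Set.Ico 0 (2 * π))
    (hθ : 0 < x 2) (hθ' : x 2 < π / 2) (hφ : 0 < x 3) (hφ' : x 3 < π / 2)
    (hsum : 0 < π - x 2 - x 3) (hsum' : π - x 2 - x 3 < π / 2) :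
    |LinearMap.det ((fderiv ℝ Tmap x : (Fin 4 → ℝ) →L[ℝ] (Fin 4 → ℝ)) :
        (Fin 4 → ℝ) →ₗ[ℝ] (Fin 4 → ℝ))| =
      16 * (x 0) ^ 3 * Real.sin (x 3) * Real.sin (x 2) * Real.sin (x 2 + x 3) := by
  have h0 : HasFDerivAt (fun y : Fin 4 → ℝ => y 0) (pr 0 : (Fin 4 → ℝ) →L[ℝ] ℝ) x :=
    hasFDerivAt_apply 0 x
  have h1 : HasFDerivAt (fun y : Fin 4 → ℝ => y 1) (pr 1 : (Fin 4 → ℝ) →L[ℝ] ℝ) x :=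
    hasFDerivAt_apply 1 x
  have h2 : HasFDerivAt (fun y : Fin 4 → ℝ => y 2) (pr 2 : (Fin 4 → ℝ) →L[ℝ] ℝ) x :=
    hasFDerivAt_apply 2 x
  have h3 : HasFDerivAt (fun y : Fin 4 → ℝ => y 3) (pr 3 : (Fin 4 → ℝ) →L[ℝ] ℝ) x :=
    hasFDerivAt_apply 3 x
  have hm2 : HasFDerivAt (fun y : Fin 4 → ℝ => -2 * y 0)
      ((-2 : ℝ) • (pr 0 : (Fin 4 → ℝ) →L[ℝ] ℝ)) x := h0.const_mul (-2)
  have h13 : HasFDerivAt (fun y : Fin 4 → ℝ => y 1 + y 3)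
      ((pr 1 + pr 3 : (Fin 4 → ℝ) →L[ℝ] ℝ)) x := h1.add h3
  have h23 : HasFDerivAt (fun y : Fin 4 → ℝ => y 2 + y 3)
      ((pr 2 + pr 3 : (Fin 4 → ℝ) →L[ℝ] ℝ)) x := h2.add h3
  have h123 : HasFDerivAt (fun y : Fin 4 → ℝ => y 1 + y 2 + y 3)
      ((pr 1 + pr 2 + pr 3 : (Fin 4 → ℝ) →L[ℝ] ℝ)) x := (h1.add h2).add h3
  have hs3 : HasFDerivAt (fun y : Fin 4 → ℝ => Real.sin (y 3))
      (Real.cos (x 3) • (pr 3 : (Fin 4 → ℝ) →L[ℝ] ℝ)) x :=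
    by simpa only [Function.comp_def] using (Real.hasDerivAt_sin (x 3)).comp_hasFDerivAt x h3
  have hc13 : HasFDerivAt (fun y : Fin 4 → ℝ => Real.cos (y 1 + y 3))
      ((-Real.sin (x 1 + x 3)) • ((pr 1 + pr 3 : (Fin 4 → ℝ) →L[ℝ] ℝ))) x :=
    by simpa only [Function.comp_def] using (Real.hasDerivAt_cos (x 1 + x 3)).comp_hasFDerivAt x h13
  have hs13 : HasFDerivAt (fun y : Fin 4 → ℝ => Real.sin (y 1 + y 3))
      (Real.cos (x 1 + x 3) • ((pr 1 + pr 3 : (Fin 4 → ℝ) →L[ℝ] ℝ))) x :=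
    by simpa only [Function.comp_def] using (Real.hasDerivAt_sin (x 1 + x 3)).comp_hasFDerivAt x h13
  have hs23 : HasFDerivAt (fun y : Fin 4 → ℝ => Real.sin (y 2 + y 3))
      (Real.cos (x 2 + x 3) • ((pr 2 + pr 3 : (Fin 4 → ℝ) →L[ℝ] ℝ))) x :=
    by simpa only [Function.comp_def] using (Real.hasDerivAt_sin (x 2 + x 3)).comp_hasFDerivAt x h23
  have hc123 : HasFDerivAt (fun y : Fin 4 → ℝ => Real.cos (y 1 + y 2 + y 3))
      ((-Real.sin (x 1 + x 2 + x 3)) • ((pr 1 + pr 2 + pr 3 : (Fin 4 → ℝ) →L[ℝ] ℝ))) x :=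
    by simpa only [Function.comp_def] using (Real.hasDerivAt_cos (x 1 + x 2 + x 3)).comp_hasFDerivAt x h123
  have hs123 : HasFDerivAt (fun y : Fin 4 → ℝ => Real.sin (y 1 + y 2 + y 3))
      (Real.cos (x 1 + x 2 + x 3) • ((pr 1 + pr 2 + pr 3 : (Fin 4 → ℝ) →L[ℝ] ℝ))) x :=
    by simpa only [Function.comp_def] using (Real.hasDerivAt_sin (x 1 + x 2 + x 3)).comp_hasFDerivAt x h123
  have hf0 := hm2.mul (hs3.mul hc13)
  have hf1 := hm2.mul (hs3.mul hs13)
  have hf2 := hm2.mul (hs23.mul hc123)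
  have hf3 := hm2.mul (hs23.mul hs123)
  set L : Fin 4 → ((Fin 4 → ℝ) →L[ℝ] ℝ) :=
    ![(-2 * x 0) • (Real.sin (x 3) • ((-Real.sin (x 1 + x 3)) • ((pr 1 + pr 3 : (Fin 4 → ℝ) →L[ℝ] ℝ)))
         + Real.cos (x 1 + x 3) • (Real.cos (x 3) • (pr 3 : (Fin 4 → ℝ) →L[ℝ] ℝ)))
       + (Real.sin (x 3) * Real.cos (x 1 + x 3)) • ((-2 : ℝ) • (pr 0 : (Fin 4 → ℝ) →L[ℝ] ℝ)),
      (-2 * x 0) • (Real.sin (x 3) • (Real.cos (x 1 + x 3) • ((pr 1 + pr 3 : (Fin 4 → ℝ) →L[ℝ] ℝ)))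
         + Real.sin (x 1 + x 3) • (Real.cos (x 3) • (pr 3 : (Fin 4 → ℝ) →L[ℝ] ℝ)))
       + (Real.sin (x 3) * Real.sin (x 1 + x 3)) • ((-2 : ℝ) • (pr 0 : (Fin 4 → ℝ) →L[ℝ] ℝ)),
      (-2 * x 0) • (Real.sin (x 2 + x 3) • ((-Real.sin (x 1 + x 2 + x 3)) • ((pr 1 + pr 2 + pr 3 : (Fin 4 → ℝ) →L[ℝ] ℝ)))
         + Real.cos (x 1 + x 2 + x 3) • (Real.cos (x 2 + x 3) • ((pr 2 + pr 3 : (Fin 4 → ℝ) →L[ℝ] ℝ))))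
       + (Real.sin (x 2 + x 3) * Real.cos (x 1 + x 2 + x 3)) • ((-2 : ℝ) • (pr 0 : (Fin 4 → ℝ) →L[ℝ] ℝ)),
      (-2 * x 0) • (Real.sin (x 2 + x 3) • (Real.cos (x 1 + x 2 + x 3) • ((pr 1 + pr 2 + pr 3 : (Fin 4 → ℝ) →L[ℝ] ℝ)))
         + Real.sin (x 1 + x 2 + x 3) • (Real.cos (x 2 + x 3) • ((pr 2 + pr 3 : (Fin 4 → ℝ) →L[ℝ] ℝ))))
       + (Real.sin (x 2 + x 3) * Real.sin (x 1 + x 2 + x 3)) • ((-2 : ℝ) • (pr 0 : (Fin 4 → ℝ) →L[ℝ] ℝ))] with hL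
  have hT : HasFDerivAt Tmap (ContinuousLinearMap.pi L) x := by
    refine hasFDerivAt_pi'.2 fun i => ?_
    rw [ContinuousLinearMap.proj_pi]
    fin_cases i
    · simpa only [hL, Tmap, Matrix.cons_val_zero, Fin.isValue, Fin.reduceFinMk, Pi.mul_def] using hf0
    · simpa only [hL, Tmap, Matrix.cons_val_one, Matrix.head_cons, Matrix.cons_val_zero, Fin.isValue, Fin.reduceFinMk, Pi.mul_def] using hf1
    · simpa only [hL, Tmap, Matrix.cons_val_two, Matrix.tail_cons, Matrix.head_cons, Fin.isValue, Fin.reduceFinMk, Pi.mul_def] using hf2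
    · simpa only [hL, Tmap, Matrix.cons_val_three, Matrix.tail_cons, Matrix.head_cons, Fin.isValue, Fin.reduceFinMk, Pi.mul_def] using hf3
  rw [hT.fderiv]
  rw [← LinearMap.det_toMatrix' ((ContinuousLinearMap.pi L : (Fin 4 → ℝ) →L[ℝ] (Fin 4 → ℝ)) :
      (Fin 4 → ℝ) →ₗ[ℝ] (Fin 4 → ℝ))]
  have hdet : (LinearMap.toMatrix' ((ContinuousLinearMap.pi L : (Fin 4 → ℝ) →L[ℝ] (Fin 4 → ℝ)) :
      (Fin 4 → ℝ) →ₗ[ℝ] (Fin 4 → ℝ))).det =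
      16 * (x 0) ^ 3 * Real.sin (x 3) * Real.sin (x 2) * Real.sin (x 2 + x 3) := by
    rw [det_fin_four']
    simp only [LinearMap.toMatrix'_apply, ContinuousLinearMap.coe_coe,
      ContinuousLinearMap.pi_apply, hL, Matrix.cons_val_zero, Matrix.cons_val_one,
      Matrix.head_cons, Matrix.cons_val_two, Matrix.cons_val_three, Matrix.tail_cons,
      ContinuousLinearMap.add_apply, ContinuousLinearMap.smul_apply,
      pr_apply, Fin.isValue, smul_eq_mul, Pi.single_apply, Fin.reduceEq, reduceIte,
      mul_one, mul_zero, zero_mul, add_zero, zero_add, mul_neg, neg_mul, neg_zero, neg_neg]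
    have h4 : Real.sin (x 2) =
        Real.sin (x 2 + x 3) * Real.cos (x 3) - Real.cos (x 2 + x 3) * Real.sin (x 3) := by
      rw [← Real.sin_sub]; ring_nf
    linear_combination
      (16 * (x 0) ^ 3 * Real.sin (x 3) * Real.sin (x 2 + x 3) *
            (Real.sin (x 1 + x 3) ^ 2 + Real.cos (x 1 + x 3) ^ 2) *
            (Real.cos (x 3) * Real.sin (x 2 + x 3) - Real.sin (x 3) * Real.cos (x 2 + x 3))) *
          Real.sin_sq_add_cos_sq (x 1 + x 2 + x 3) +
        (16 * (x 0) ^ 3 * Real.sin (x 3) * Real.sin (x 2 + x 3) *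
            (Real.cos (x 3) * Real.sin (x 2 + x 3) - Real.sin (x 3) * Real.cos (x 2 + x 3))) *
          Real.sin_sq_add_cos_sq (x 1 + x 3) +
        (-(16 * (x 0) ^ 3 * Real.sin (x 3) * Real.sin (x 2 + x 3))) * h4
  rw [hdet]
  have hst : 0 < Real.sin (x 2 + x 3) :=
    Real.sin_pos_of_pos_of_lt_pi (by linarith) (by linarith)
  have h2pos : 0 < Real.sin (x 2) := Real.sin_pos_of_pos_of_lt_pi hθ (by linarith [Real.pi_pos])
  have h3pos : 0 < Real.sin (x 3) := Real.sin_pos_of_pos_of_lt_pi hφ (by linarith [Real.pi_pos])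
  rw [abs_of_pos]
  positivity
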